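/- Let A be a finite p-algebra. For each completely meet-irreducible congruence μ on A, the infimum p of the ⊤-class of μ is a join-irreducible element of A and the ⊤-class of μ equals {x ∈ A : p ≤ x}; moreover the map μ ↦ p is a bijection from the set of completely meet-irreducible congruences of A onto the set of join-irreducible elements of A, and it is order-inverting in the sense that the ⊤-class of μ is contained in the ⊤-class of ν if and only if the element associated to ν is ≤ the element associated to μ. -/

import Mathlib

variable {A : Type*}

/-- A congruence of a p-algebra `(A, ⊓, ⊔, *, ⊥, ⊤)`: an equivalence relation
compatible with meet, join and the pseudocomplementation `star`. -/
def IsPCong [Lattice A] (star : A → A) (θ : A → A → Prop) : Prop :=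
  Equivalence θ ∧
  (∀ a b c d : A, θ a b → θ c d → θ (a ⊓ c) (b ⊓ d)) ∧
  (∀ a b c d : A, θ a b → θ c d → θ (a ⊔ c) (b ⊔ d)) ∧
  (∀ a b : A, θ a b → θ (star a) (star b))

/-- A completely meet-irreducible congruence: a congruence `μ` such that whenever `μ`
is the intersection of a (possibly empty) family of congruences, `μ` belongs to the
family.  (Taking the empty family, such a `μ` is never the total relation.) -/
def IsCMI [Lattice A] (star : A → A) (μ : A → A → Prop) : Prop :=
  IsPCong star μ ∧
  ∀ S : Set (A → A → Prop), (∀ θ ∈ S, IsPCong star θ) →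
    (μ = fun a b => ∀ θ ∈ S, θ a b) → μ ∈ S

/-- A relation has exactly two equivalence classes. -/
def HasTwoClasses (θ : A → A → Prop) : Prop :=
  ∃ a b : A, ¬ θ a b ∧ ∀ c : A, θ c a ∨ θ c b

/-- A prime filter of a lattice: proper, nonempty, upward closed, closed under `⊓`,
and `a ⊔ b ∈ F` implies `a ∈ F` or `b ∈ F`. -/
def IsPrimeFilter [Lattice A] (F : Set A) : Prop :=
  F.Nonempty ∧ F ≠ Set.univ ∧ (∀ a b : A, a ∈ F → a ≤ b → b ∈ F) ∧
  (∀ a b : A, a ∈ F → b ∈ F → a ⊓ b ∈ F) ∧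
  (∀ a b : A, a ⊔ b ∈ F → a ∈ F ∨ b ∈ F)

set_option linter.unusedSectionVars false
set_option linter.unusedVariables false
set_option maxHeartbeats 1000000

section PAux

variable [DistribLattice A] [BoundedOrder A] [Fintype A]

/-- sup of all elements satisfying `P`. -/
noncomputable def pjsup (P : A → Prop) : A :=
  letI := Classical.decPred P
  (Finset.univ.filter P).sup id

lemma le_pjsup {P : A → Prop} {x : A} (hx : P x) : x ≤ pjsup P := by
  letI := Classical.decPred P
  exact Finset.le_sup (f := id) (by simpa using hx)

lemma pjsup_le {P : A → Prop} {c : A} (h : ∀ x, P x → x ≤ c) : pjsup P ≤ c := by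
  letI := Classical.decPred P
  exact Finset.sup_le fun x hx => h x (by simpa using hx)

lemma SupPrime.le_pjsup {P : A → Prop} {a : A} (ha : SupPrime a) (h : a ≤ pjsup P) :
    ∃ x, P x ∧ a ≤ x := by
  letI := Classical.decPred P
  obtain ⟨x, hx, hax⟩ := (ha.le_finset_sup).1 h
  exact ⟨x, by simpa using hx, hax⟩

lemma le_of_supIrred_le {a c : A} (h : ∀ q, SupIrred q → q ≤ a → q ≤ c) : a ≤ c := by
  obtain ⟨s, hs, hirr⟩ := exists_supIrred_decomposition a
  rw [← hs]
  exact Finset.sup_le fun b hb => h b (hirr hb) (hs ▸ Finset.le_sup (f := id) hb)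

/-- the "lower part" of an element: sup of everything strictly below. -/
noncomputable def lowerPart (x : A) : A := pjsup (fun y => y < x)

lemma lt_le_lowerPart {x y : A} (h : y < x) : y ≤ lowerPart x := le_pjsup h

lemma lowerPart_le {x : A} : lowerPart x ≤ x := pjsup_le fun _ h => h.le

lemma not_le_lowerPart {x : A} (hx : SupIrred x) : ¬ x ≤ lowerPart x := by
  intro h
  obtain ⟨y, hy, hxy⟩ := hx.supPrime.le_pjsup h
  exact absurd (lt_of_le_of_lt hxy hy) (lt_irrefl x)

lemma le_lowerPart_of_ne {x z : A} (hz : z ≤ x) (hne : z ≠ x) : z ≤ lowerPart x :=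
  lt_le_lowerPart (lt_of_le_of_ne hz hne)

lemma exists_atom_le {a : A} (ha : a ≠ ⊥) : ∃ t, IsAtom t ∧ t ≤ a :=
  (eq_bot_or_exists_atom_le a).resolve_left ha

lemma IsAtom.le_or_meet_bot {t b : A} (ht : IsAtom t) : t ≤ b ∨ t ⊓ b = ⊥ := by
  rcases eq_or_lt_of_le (inf_le_left : t ⊓ b ≤ t) with h | h
  · exact Or.inl (inf_eq_left.mp h)
  · exact Or.inr (ht.2 _ h)

lemma IsAtom.supIrred {t : A} (ht : IsAtom t) : SupIrred t := by
  constructor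
  · intro hmin
    exact ht.1 (le_bot_iff.mp (hmin bot_le))
  · intro b c h
    by_contra hbc
    push_neg at hbc
    have hb : b = ⊥ := ht.2 _ (lt_of_le_of_ne (h ▸ le_sup_left) hbc.1)
    have hc : c = ⊥ := ht.2 _ (lt_of_le_of_ne (h ▸ le_sup_right) hbc.2)
    exact ht.1 (by rw [← h, hb, hc, sup_idem])

end PAux

section PCong

variable [DistribLattice A] [BoundedOrder A] [Fintype A] {star : A → A}
variable (hp : ∀ x y : A, x ⊓ y = ⊥ ↔ x ≤ star y)

include hp

lemma pstar_bot : star ⊥ = (⊤ : A) :=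
  le_antisymm le_top ((hp ⊤ ⊥).1 (by simp))

lemma meet_star_self (a : A) : a ⊓ star a = ⊥ := by
  rw [inf_comm]; exact (hp (star a) a).2 le_rfl

omit hp

/-- The candidate completely meet-irreducible congruence attached to `x`. -/
def nu (x : A) : A → A → Prop := fun a b =>
  (x ≤ a ↔ x ≤ b) ∧ ∀ t, IsAtom t → t ≤ x → (t ≤ a ↔ t ≤ b)

include hp

lemma nu_pcong {x : A} (hx : SupIrred x) : IsPCong star (nu x) := by
  have hxp := hx.supPrime
  refine ⟨⟨fun a => ⟨Iff.rfl, fun t _ _ => Iff.rfl⟩,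
      fun h => ⟨h.1.symm, fun t ht htx => (h.2 t ht htx).symm⟩,
      fun h h' => ⟨h.1.trans h'.1, fun t ht htx => (h.2 t ht htx).trans (h'.2 t ht htx)⟩⟩,
    ?_, ?_, ?_⟩
  · intro a b c d h h'
    exact ⟨by simp only [le_inf_iff, h.1, h'.1],
      fun t ht htx => by simp only [le_inf_iff, h.2 t ht htx, h'.2 t ht htx]⟩
  · intro a b c d h h'
    refine ⟨?_, fun t ht htx => ?_⟩
    · rw [hxp.le_sup, hxp.le_sup, h.1, h'.1]
    · rw [(ht.supIrred.supPrime).le_sup, (ht.supIrred.supPrime).le_sup,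
        h.2 t ht htx, h'.2 t ht htx]
  · intro a b h
    have key : ∀ a b : A, ((x ≤ a ↔ x ≤ b) ∧ ∀ t, IsAtom t → t ≤ x → (t ≤ a ↔ t ≤ b)) →
        x ≤ star a → x ≤ star b := by
      intro a b h hsa
      rw [← hp] at hsa ⊢
      by_contra hne
      obtain ⟨t, ht, htb⟩ := exists_atom_le hne
      have htx : t ≤ x := htb.trans inf_le_left
      have htb' : t ≤ b := htb.trans inf_le_right
      have hta : t ≤ a := (h.2 t ht htx).2 htb'
      exact ht.1 (le_bot_iff.mp (hsa ▸ le_inf htx hta))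
    refine ⟨⟨key a b h, key b a ⟨h.1.symm, fun t ht htx => (h.2 t ht htx).symm⟩⟩,
      fun t ht htx => ?_⟩
    have atomstar : ∀ c : A, (t ≤ star c ↔ ¬ t ≤ c) := by
      intro c
      rw [← hp]
      constructor
      · intro h1 h2
        exact ht.1 (le_bot_iff.mp (h1 ▸ le_inf le_rfl h2))
      · intro h1
        exact (ht.le_or_meet_bot (b := c)).resolve_left h1
    rw [atomstar a, atomstar b, h.2 t ht htx]

omit hp in
lemma nu_top_class {x : A} : {a : A | nu x a ⊤} = Set.Ici x := by
  ext a
  simp only [Set.mem_setOf_eq, Set.mem_Ici, nu]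
  constructor
  · intro h
    exact h.1.2 le_top
  · intro h
    exact ⟨⟨fun _ => le_top, fun _ => h⟩, fun t ht htx => ⟨fun _ => le_top, fun _ => htx.trans h⟩⟩

end PCong

section Main

variable [DistribLattice A] [BoundedOrder A] [Fintype A] {star : A → A}
variable (hp : ∀ x y : A, x ⊓ y = ⊥ ↔ x ≤ star y)

include hp

/-- Any congruence separating `x` from `lowerPart x` is contained in `nu x`. -/
lemma theta_sub_nu {θ : A → A → Prop} (hθ : IsPCong star θ) {x : A} (hx : SupIrred x)
    (hsep : ¬ θ x (lowerPart x)) {a b : A} (hab : θ a b) : nu x a b := by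
  obtain ⟨heq, hmeet, hjoin, hstar⟩ := hθ
  -- step lemma
  have step : ∀ z : A, θ x z → z ≤ lowerPart x → False := by
    intro z hz hzl
    have h1 := hjoin x z (lowerPart x) (lowerPart x) hz (heq.refl _)
    rw [sup_eq_left.mpr (lowerPart_le), sup_eq_right.mpr hzl] at h1
    exact hsep h1
  have h1 : ∀ a b : A, θ a b → x ≤ a → x ≤ b := by
    intro a b hab hxa
    by_contra hxb
    have h2 := hmeet a b x x hab (heq.refl x)
    rw [inf_eq_right.mpr hxa] at h2
    refine step (b ⊓ x) h2 (le_lowerPart_of_ne inf_le_right ?_)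
    intro h
    exact hxb (h ▸ inf_le_left)
  have h2 : ∀ a b : A, θ a b → ∀ t, IsAtom t → t ≤ x → t ≤ a → t ≤ b := by
    intro a b hab t ht htx hta
    by_contra htb
    have hm := hmeet a b t t hab (heq.refl t)
    have hbt : b ⊓ t = ⊥ := by
      rw [inf_comm]; exact (ht.le_or_meet_bot (b := b)).resolve_left htb
    rw [inf_eq_right.mpr hta, hbt] at hm
    -- hm : θ t ⊥
    have hst := hstar t ⊥ hm
    rw [pstar_bot hp] at hst
    have hmx := hmeet x x (star t) ⊤ (heq.refl x) hst
    rw [inf_top_eq] at hmx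
    refine step (x ⊓ star t) (heq.symm hmx) (le_lowerPart_of_ne inf_le_left ?_)
    intro h
    have hxst : x ≤ star t := h ▸ inf_le_right
    have : t ⊓ t = ⊥ := (hp t t).2 (htx.trans hxst)
    exact ht.1 (by simpa using this)
  exact ⟨⟨h1 a b hab, h1 b a (heq.symm hab)⟩,
    fun t ht htx => ⟨h2 a b hab t ht htx, h2 b a (heq.symm hab) t ht htx⟩⟩

omit hp

lemma lemY {θ : A → A → Prop} (hθ : IsPCong star θ) :
    ∀ e c : A, c ≤ e → (∀ q, SupIrred q → q ≤ e → ¬ q ≤ c → θ q (lowerPart q)) → θ e c := by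
  intro e
  induction e using WellFoundedLT.induction with
  | _ e IH =>
    intro c hce hq
    by_cases hec : e ≤ c
    · have : e = c := le_antisymm hec hce
      exact this ▸ hθ.1.refl e
    · letI := Classical.dec
      classical
      -- the finset of sup-irreducibles below e but not below c
      set s : Finset A := Finset.univ.filter (fun q => SupIrred q ∧ q ≤ e ∧ ¬ q ≤ c) with hs
      have hsne : s.Nonempty := by
        by_contra hempty
        rw [Finset.not_nonempty_iff_eq_empty] at hempty
        refine hec (le_of_supIrred_le fun q hq1 hq2 => ?_)
        by_contra hqc
        have : q ∈ s := by simp [hs, hq1, hq2, hqc]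
        simp [hempty] at this
      obtain ⟨x, hxs, hxmax⟩ := s.exists_maximal hsne
      have hx : SupIrred x := by simp [hs] at hxs; exact hxs.1
      have hxe : x ≤ e := by simp [hs] at hxs; exact hxs.2.1
      have hxc : ¬ x ≤ c := by simp [hs] at hxs; exact hxs.2.2
      set e' : A := pjsup (fun q => SupIrred q ∧ q ≤ e ∧ q ≠ x) with he'
      have he'e : e' ≤ e := pjsup_le fun q hq => hq.2.1
      have hxe' : ¬ x ≤ e' := by
        intro h
        obtain ⟨q, ⟨hq1, hq2, hq3⟩, hxq⟩ := hx.supPrime.le_pjsup h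
        have hxltq : x < q := lt_of_le_of_ne hxq (Ne.symm hq3)
        have hqc : ¬ q ≤ c := fun h => hxc (hxq.trans h)
        have : q ∈ s := by simp [hs, hq1, hq2, hqc]
        exact (lt_irrefl x) (lt_of_lt_of_le hxltq (hxmax this hxltq.le))
      have hee' : e ≤ e' ⊔ x := by
        refine le_of_supIrred_le fun q hq1 hq2 => ?_
        by_cases hqx : q = x
        · exact hqx ▸ le_sup_right
        · exact le_sup_of_le_left (le_pjsup ⟨hq1, hq2, hqx⟩)
      have hsup : e' ⊔ x = e := le_antisymm (sup_le he'e hxe) hee'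
      have hce' : c ≤ e' := by
        refine le_of_supIrred_le fun q hq1 hq2 => ?_
        refine le_pjsup ⟨hq1, hq2.trans hce, ?_⟩
        rintro rfl
        exact hxc hq2
      have hle' : lowerPart x ≤ e' := by
        refine le_of_supIrred_le fun q hq1 hq2 => ?_
        have hqx : q ≤ x := hq2.trans lowerPart_le
        refine le_pjsup ⟨hq1, hqx.trans hxe, ?_⟩
        rintro rfl
        exact not_le_lowerPart hx hq2
      have hstep := hθ.2.2.1 e' e' x (lowerPart x) (hθ.1.refl e') (hq x hx hxe hxc)
      rw [hsup, sup_eq_left.mpr hle'] at hstep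
      -- hstep : θ e e'
      have he'lt : e' < e := lt_of_le_of_ne he'e (fun h => hxe' (h ▸ hxe))
      have hrec := IH e' he'lt c hce' (fun q hq1 hq2 hq3 => hq q hq1 (hq2.trans he'e) hq3)
      exact hθ.1.trans hstep hrec

include hp

/-- every congruence is the intersection of the `nu x` above it. -/
lemma cong_decomp {μ : A → A → Prop} (hμ : IsPCong star μ) (a b : A) :
    μ a b ↔ ∀ x, SupIrred x → ¬ μ x (lowerPart x) → nu x a b := by
  constructor
  · intro hab x hx hsep
    exact theta_sub_nu hp hμ hx hsep hab
  · intro h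
    have hA : μ a (a ⊓ b) := by
      refine lemY hμ a (a ⊓ b) inf_le_left fun q hq1 hq2 hq3 => ?_
      by_contra hqs
      have hnu := h q hq1 hqs
      exact hq3 (le_inf hq2 (hnu.1.1 hq2))
    have hB : μ b (a ⊓ b) := by
      refine lemY hμ b (a ⊓ b) inf_le_right fun q hq1 hq2 hq3 => ?_
      by_contra hqs
      have hnu := h q hq1 hqs
      exact hq3 (le_inf (hnu.1.2 hq2) hq2)
    exact hμ.1.trans hA (hμ.1.symm hB)

end Main

section Final

variable [DistribLattice A] [BoundedOrder A] [Fintype A] {star : A → A}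
variable (hp : ∀ x y : A, x ⊓ y = ⊥ ↔ x ≤ star y)

omit hp

lemma rel_ext {θ ψ : A → A → Prop} (h : ∀ a b, θ a b ↔ ψ a b) : θ = ψ :=
  funext fun a => funext fun b => propext (h a b)

include hp

lemma nu_cmi {x : A} (hx : SupIrred x) : IsCMI star (nu x) := by
  refine ⟨nu_pcong hp hx, ?_⟩
  intro S hS heq
  by_contra hns
  have hall : ∀ θ ∈ S, θ x (lowerPart x) := by
    intro θ hθS
    by_contra hsep
    have hsub : ∀ a b, θ a b → nu x a b := fun a b => theta_sub_nu hp (hS θ hθS) hx hsep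
    have hsub2 : ∀ a b, nu x a b → θ a b := by
      intro a b hab
      have := congrFun (congrFun heq a) b
      exact (this ▸ hab : ∀ θ' ∈ S, θ' a b) θ hθS
    have : θ = nu x := rel_ext fun a b => ⟨hsub a b, hsub2 a b⟩
    exact hns (this ▸ hθS)
  have : nu x x (lowerPart x) := by
    rw [heq]; exact hall
  exact not_le_lowerPart hx (this.1.1 le_rfl)

lemma cmi_eq_nu {μ : A → A → Prop} (hμ : IsCMI star μ) :
    ∃ x, SupIrred x ∧ μ = nu x := by
  classical
  set S : Set (A → A → Prop) :=
    {θ | ∃ x, SupIrred x ∧ ¬ μ x (lowerPart x) ∧ θ = nu x} with hS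
  have h1 : ∀ θ ∈ S, IsPCong star θ := by
    rintro θ ⟨x, hx, -, rfl⟩
    exact nu_pcong hp hx
  have h2 : μ = fun a b => ∀ θ ∈ S, θ a b := by
    refine rel_ext fun a b => ?_
    rw [cong_decomp hp hμ.1 a b]
    constructor
    · rintro h θ ⟨x, hx, hsep, rfl⟩
      exact h x hx hsep
    · intro h x hx hsep
      exact h (nu x) ⟨x, hx, hsep, rfl⟩
  obtain ⟨x, hx, -, hμx⟩ := hμ.2 S h1 h2
  exact ⟨x, hx, hμx⟩

end Final

section Inf

variable [DistribLattice A] [BoundedOrder A] [Fintype A]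

noncomputable def pjinf (P : A → Prop) : A :=
  letI := Classical.decPred P
  (Finset.univ.filter P).inf id

lemma pjinf_le {P : A → Prop} {x : A} (hx : P x) : pjinf P ≤ x := by
  letI := Classical.decPred P
  exact Finset.inf_le (by simpa using hx)

lemma le_pjinf {P : A → Prop} {c : A} (h : ∀ x, P x → c ≤ x) : c ≤ pjinf P := by
  letI := Classical.decPred P
  exact Finset.le_inf fun x hx => h x (by simpa using hx)

lemma pjinf_nu {x : A} : pjinf (fun a => nu x a ⊤) = x := by
  have hset : ∀ a : A, nu x a ⊤ ↔ x ≤ a := by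
    intro a
    have := Set.ext_iff.mp (nu_top_class (A := A) (x := x)) a
    simpa using this
  exact le_antisymm (pjinf_le ((hset x).2 le_rfl)) (le_pjinf fun a ha => (hset a).1 ha)

end Inf


/-- In a finite p-algebra, sending a completely meet-irreducible congruence `μ` to the
infimum `p` of its `⊤`-class gives a join-irreducible element with `⊤`-class `= Ici p`;
this assignment is a bijection from the completely meet-irreducible congruences onto
the join-irreducible elements, and it inverts the order given by inclusion of
`⊤`-classes. -/
theorem stmt12 [DistribLattice A] [BoundedOrder A] [Finite A] (star : A → A)
    (hp : ∀ x y : A, x ⊓ y = ⊥ ↔ x ≤ star y) :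
    ∃ f : (A → A → Prop) → A,
      (∀ μ : A → A → Prop, IsCMI star μ →
        IsGLB {a : A | μ a ⊤} (f μ) ∧ SupIrred (f μ) ∧ {a : A | μ a ⊤} = Set.Ici (f μ)) ∧
      (∀ μ ν : A → A → Prop, IsCMI star μ → IsCMI star ν → f μ = f ν → μ = ν) ∧
      (∀ p : A, SupIrred p → ∃ μ : A → A → Prop, IsCMI star μ ∧ f μ = p) ∧
      (∀ μ ν : A → A → Prop, IsCMI star μ → IsCMI star ν →
        ({a : A | μ a ⊤} ⊆ {a : A | ν a ⊤} ↔ f ν ≤ f μ)) := by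
  cases nonempty_fintype A
  refine ⟨fun μ => pjinf (fun a => μ a ⊤), ?_, ?_, ?_, ?_⟩
  · intro μ hμ
    obtain ⟨x, hx, rfl⟩ := cmi_eq_nu hp hμ
    dsimp only
    rw [nu_top_class, pjinf_nu]
    exact ⟨isGLB_Ici, hx, rfl⟩
  · intro μ ν hμ hν hf
    obtain ⟨x, hx, rfl⟩ := cmi_eq_nu hp hμ
    obtain ⟨y, hy, rfl⟩ := cmi_eq_nu hp hν
    dsimp only at hf
    rw [pjinf_nu, pjinf_nu] at hf
    rw [hf]
  · intro p hpirr
    exact ⟨nu p, nu_cmi hp hpirr, pjinf_nu⟩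
  · intro μ ν hμ hν
    obtain ⟨x, hx, rfl⟩ := cmi_eq_nu hp hμ
    obtain ⟨y, hy, rfl⟩ := cmi_eq_nu hp hν
    dsimp only
    rw [nu_top_class, nu_top_class, pjinf_nu, pjinf_nu, Set.Ici_subset_Ici]
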